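/- Let h ∈ H_{r,n} with r < n, h(r) = n, and exactly one j ∈ [r] with h(j) = r (necessarily j < r). Define g', g'' ∈ H_{r−1,n} on [r−1]∪{n} by: g'(i) = h(i) for i ∈ [r−1] with i ≠ j and g'(j) = n; g''(i) = h(i) for i ∈ [r−1] with i ≠ j and g''(j) = r−1. Then for every N ≥ 1, csf_q^N(h) = csf_q^N(g') + q·[n−r]_q · csf_q^N(g''). (This is formula (74) of Corollary 48(2), expressed via chromatic quasisymmetric functions using the paper's generalized Shareshian–Wachs theorem.) -/

import Mathlib

namespace GenHess

open scoped Classical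

noncomputable section

/-- The vertex set `I ∪ {n}` of the weighted graph of a generalized Hessenberg function. -/
def verts (n : ℕ) (I : Finset ℕ) : Finset ℕ := insert n I

/-- `h : I ∪ {n} → I ∪ {n}` is a generalized Hessenberg function for `(I, n)`,
with `I ⊆ {1, …, n-1}`, `h i ≥ i`, and `h` weakly increasing on `I ∪ {n}`. -/
def IsGenHess (n : ℕ) (I : Finset ℕ) (h : ℕ → ℕ) : Prop :=
  (∀ i ∈ I, 1 ≤ i ∧ i ≤ n - 1) ∧
  (∀ i ∈ verts n I, h i ∈ verts n I) ∧
  (∀ i ∈ verts n I, i ≤ h i) ∧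
  (∀ i ∈ verts n I, ∀ j ∈ verts n I, i ≤ j → h i ≤ h j)

/-- The weight `w_h(i_k) = i_k - i_{k-1}` of a vertex: `v` minus the largest vertex
below `v` (or `0` if there is none). -/
def wt (n : ℕ) (I : Finset ℕ) (v : ℕ) : ℕ :=
  v - ((verts n I).filter (fun u => u < v)).sup id

/-- A proper coloring of the weighted graph `(Γ_h, w_h)` with colors in `[N]`:
each vertex `v` gets a set of colors of size `w_h(v)`, and adjacent vertices get
disjoint color sets (there is an edge `{i,j}` whenever `i < j ≤ h i`). -/
def IsProper {N : ℕ} (n : ℕ) (I : Finset ℕ) (h : ℕ → ℕ)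
    (γ : {x // x ∈ verts n I} → Finset (Fin N)) : Prop :=
  (∀ v : {x // x ∈ verts n I}, (γ v).card = wt n I v.val) ∧
  ∀ v u : {x // x ∈ verts n I}, v.val < u.val → u.val ≤ h v.val → Disjoint (γ v) (γ u)

/-- The ascent statistic `asc_h(γ) = Σ_{edges i<j} #{(a,b) ∈ γ(i)×γ(j) : a < b}`. -/
def asc {N : ℕ} (n : ℕ) (I : Finset ℕ) (h : ℕ → ℕ)
    (γ : {x // x ∈ verts n I} → Finset (Fin N)) : ℕ :=
  ∑ v : {x // x ∈ verts n I}, ∑ u : {x // x ∈ verts n I},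
    if v.val < u.val ∧ u.val ≤ h v.val then
      ((γ v ×ˢ γ u).filter fun ab => ab.1 < ab.2).card
    else 0

/-- The truncated chromatic quasisymmetric function `csf_q^N(h)`, as an element of
`ℤ[x_1,…,x_N][q]` (the outer `Polynomial.X` is `q`). -/
def csf (n : ℕ) (I : Finset ℕ) (h : ℕ → ℕ) (N : ℕ) :
    Polynomial (MvPolynomial (Fin N) ℤ) :=
  ∑ γ ∈ Finset.univ.filter
      (fun γ : {x // x ∈ verts n I} → Finset (Fin N) => IsProper n I h γ),
    Polynomial.C (∏ v : {x // x ∈ verts n I}, ∏ a ∈ γ v, MvPolynomial.X a) *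
      Polynomial.X ^ asc n I h γ

/-- The `q`-integer `[m]_q = 1 + q + ⋯ + q^{m-1}`. -/
def qNum (R : Type) [CommRing R] (m : ℕ) : Polynomial R :=
  ∑ i ∈ Finset.range m, Polynomial.X ^ i

/-- The `q`-factorial `[m]_q!`. -/
def qFact (R : Type) [CommRing R] : ℕ → Polynomial R
  | 0 => 1
  | m + 1 => qNum R (m + 1) * qFact R m

/-- The elementary symmetric polynomial `e_m(x_1,…,x_N)`, viewed as a constant
polynomial in `q`. -/
def esym (N m : ℕ) : Polynomial (MvPolynomial (Fin N) ℤ) :=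
  Polynomial.C (MvPolynomial.esymm (Fin N) ℤ m)

end

end GenHess

open GenHess

namespace CsfAux
open Finset Polynomial

variable {N : ℕ}

/-- number of ascending pairs between two color sets -/
noncomputable def cnt (A B : Finset (Fin N)) : ℕ :=
  ((A ×ˢ B).filter fun ab => ab.1 < ab.2).card

lemma cnt_eq_sum (A B : Finset (Fin N)) :
    cnt A B = ∑ b ∈ B, (A.filter (· < b)).card := by
  classical
  rw [cnt, Finset.card_filter, Finset.sum_product_right]
  exact Finset.sum_congr rfl fun b _ => (Finset.card_filter _ _).symm

lemma cnt_singleton_right (A : Finset (Fin N)) (c : Fin N) :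
    cnt A {c} = (A.filter (· < c)).card := by simp [cnt_eq_sum]

lemma cnt_singleton_left (B : Finset (Fin N)) (c : Fin N) :
    cnt {c} B = (B.filter (fun d => c < d)).card := by
  classical
  rw [cnt_eq_sum, Finset.card_filter]
  refine Finset.sum_congr rfl fun b _ => ?_
  simp [Finset.filter_singleton]
  split <;> simp

lemma cnt_erase (A T : Finset (Fin N)) {c : Fin N} (hc : c ∈ T) :
    cnt A T = cnt A (T.erase c) + (A.filter (· < c)).card := by
  classical
  rw [cnt_eq_sum, cnt_eq_sum, ← Finset.add_sum_erase _ _ hc, add_comm]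

lemma cnt_filter_gt (T : Finset (Fin N)) (c : Fin N) :
    ((T.erase c).filter (fun d => c < d)).card = (T.filter (fun d => c < d)).card := by
  classical
  rw [Finset.filter_erase, Finset.erase_eq_of_notMem (by simp)]

lemma qNum_succ (R : Type) [CommRing R] (m : ℕ) :
    qNum R (m + 1) = Polynomial.X * qNum R m + 1 := by
  rw [qNum, Finset.sum_range_succ', qNum, Finset.mul_sum]
  simp [pow_succ, mul_comm]

lemma key_sum (R : Type) [CommRing R] (b : Fin N) (T : Finset (Fin N)) (hT : T.Nonempty) :
    ∑ c ∈ T.erase b, (Polynomial.X : Polynomial R) ^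
        ((if b < c then 1 else 0) + (T.filter (fun d => c < d)).card)
      = Polynomial.X * qNum R (T.card - 1) +
        (if b ∈ T then 0 else Polynomial.X ^ (T.filter (fun d => b < d)).card) := by
  classical
  induction T using Finset.induction_on_max with
  | empty => exact absurd hT (by simp)
  | insert a s ha ih =>
    have has : a ∉ s := fun h => lt_irrefl a (ha a h)
    rcases s.eq_empty_or_nonempty with rfl | hs
    · have hT1 : insert a (∅ : Finset (Fin N)) = {a} := rfl
      by_cases hab : a = b
      · subst hab; simp [qNum]
      · rw [hT1, Finset.erase_eq_of_notMem (by simp [Ne.symm hab]), Finset.sum_singleton]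
        simp [qNum, Finset.filter_singleton, Ne.symm hab, apply_ite Finset.card, lt_irrefl]
    · have hcards : 1 ≤ s.card := hs.card_pos
      have hcardT : (insert a s).card - 1 = s.card := by
        rw [Finset.card_insert_of_notMem has]; omega
      have hfilt : ∀ c ∈ s, ((insert a s).filter (fun d => c < d)).card
          = (s.filter (fun d => c < d)).card + 1 := by
        intro c hc
        rw [Finset.filter_insert, if_pos (ha c hc),
          Finset.card_insert_of_notMem (fun hmem => has (Finset.mem_of_mem_filter _ hmem))]
      have hfilta : ((insert a s).filter (fun d => a < d)).card = 0 := by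
        rw [Finset.card_eq_zero, Finset.filter_eq_empty_iff]
        intro x hx
        rcases Finset.mem_insert.mp hx with rfl | hx
        · exact lt_irrefl _
        · exact fun hlt => absurd (ha x hx) (lt_asymm hlt)
      have hqs : qNum R s.card = Polynomial.X * qNum R (s.card - 1) + 1 := by
        obtain ⟨m, hm⟩ : ∃ m, s.card = m + 1 := ⟨s.card - 1, by omega⟩
        rw [hm]; simpa using qNum_succ R m
      by_cases hab : b = a
      · subst hab
        rw [Finset.erase_insert has]
        have hstep : ∀ c ∈ s, (Polynomial.X : Polynomial R) ^
            ((if b < c then 1 else 0) + ((insert b s).filter (fun d => c < d)).card)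
            = Polynomial.X * Polynomial.X ^ ((if b < c then 1 else 0) + (s.filter (fun d => c < d)).card) := by
          intro c hc
          rw [hfilt c hc,
            show (if b < c then 1 else 0) + ((s.filter (fun d => c < d)).card + 1)
              = ((if b < c then 1 else 0) + (s.filter (fun d => c < d)).card) + 1 from by omega,
            pow_succ]
          exact mul_comm _ _
        have ih' := ih hs
        rw [Finset.erase_eq_of_notMem has, if_neg has] at ih'
        have h0 : (s.filter (fun d => b < d)).card = 0 := by
          rw [Finset.card_eq_zero, Finset.filter_eq_empty_iff]
          exact fun x hx => lt_asymm (ha x hx)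
        rw [h0, pow_zero] at ih'
        rw [Finset.sum_congr rfl hstep, ← Finset.mul_sum, ih',
          if_pos (Finset.mem_insert_self _ _), hcardT, hqs]
        ring
      · rw [Finset.erase_insert_of_ne (Ne.symm hab),
          Finset.sum_insert (fun hmem => has (Finset.mem_of_mem_erase hmem))]
        have hstep : ∀ c ∈ s.erase b, (Polynomial.X : Polynomial R) ^
            ((if b < c then 1 else 0) + ((insert a s).filter (fun d => c < d)).card)
            = Polynomial.X * Polynomial.X ^ ((if b < c then 1 else 0) + (s.filter (fun d => c < d)).card) := by
          intro c hc
          rw [hfilt c (Finset.mem_of_mem_erase hc),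
            show (if b < c then 1 else 0) + ((s.filter (fun d => c < d)).card + 1)
              = ((if b < c then 1 else 0) + (s.filter (fun d => c < d)).card) + 1 from by omega,
            pow_succ]
          exact mul_comm _ _
        rw [Finset.sum_congr rfl hstep, ← Finset.mul_sum, ih hs, hfilta, hcardT, hqs, Nat.add_zero]
        by_cases hbs : b ∈ s
        · rw [if_pos hbs, if_pos (Finset.mem_insert_of_mem hbs), if_pos (ha b hbs)]
          ring
        · rw [if_neg hbs, if_neg (fun hmem => (Finset.mem_insert.mp hmem).elim hab hbs)]
          by_cases hba : b < a
          · rw [show (insert a s).filter (fun d => b < d)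
                = insert a (s.filter (fun d => b < d)) from by
                  rw [Finset.filter_insert, if_pos hba],
              Finset.card_insert_of_notMem (fun hmem => has (Finset.mem_of_mem_filter _ hmem)),
              if_pos hba]
            ring
          · have h1 : (s.filter (fun d => b < d)).card = 0 := by
              rw [Finset.card_eq_zero, Finset.filter_eq_empty_iff]
              exact fun x hx hlt => hba (lt_trans hlt (ha x hx))
            have h2 : ((insert a s).filter (fun d => b < d)).card = 0 := by
              rw [Finset.card_eq_zero, Finset.filter_eq_empty_iff]
              intro x hx
              rcases Finset.mem_insert.mp hx with rfl | hx
              · exact hba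
              · exact fun hlt => hba (lt_trans hlt (ha x hx))
            rw [if_neg hba, h1, h2]
            ring

section Transport
open GenHess

lemma mem_verts_iff {n m v : ℕ} :
    v ∈ verts n (Finset.Icc 1 m) ↔ v = n ∨ (1 ≤ v ∧ v ≤ m) := by
  simp [verts, Finset.mem_insert, Finset.mem_Icc]

lemma sup_Icc_one (m : ℕ) : (Finset.Icc 1 m).sup id = m := by
  cases m with
  | zero => simp
  | succ k =>
    refine le_antisymm (Finset.sup_le fun x hx => (Finset.mem_Icc.mp hx).2) ?_
    exact Finset.le_sup (f := id) (Finset.mem_Icc.mpr ⟨Nat.succ_le_succ (Nat.zero_le k), le_rfl⟩)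

lemma wt_small {n m v : ℕ} (hmn : m < n) (h1 : 1 ≤ v) (hv : v ≤ m) :
    wt n (Finset.Icc 1 m) v = 1 := by
  have hf : (verts n (Finset.Icc 1 m)).filter (fun u => u < v) = Finset.Icc 1 (v-1) := by
    ext x
    rw [Finset.mem_filter, mem_verts_iff, Finset.mem_Icc]
    omega
  rw [wt, hf, sup_Icc_one]
  omega

lemma wt_top {n m : ℕ} (hmn : m < n) :
    wt n (Finset.Icc 1 m) n = n - m := by
  have hf : (verts n (Finset.Icc 1 m)).filter (fun u => u < n) = Finset.Icc 1 m := by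
    ext x
    rw [Finset.mem_filter, mem_verts_iff, Finset.mem_Icc]
    omega
  rw [wt, hf, sup_Icc_one]

lemma verts_insert {n r : ℕ} (hr1 : 1 ≤ r) (hrn : r < n) :
    verts n (Finset.Icc 1 r) = insert r (verts n (Finset.Icc 1 (r-1))) := by
  ext x
  rw [mem_verts_iff, Finset.mem_insert, mem_verts_iff]
  omega

lemma r_not_mem_Vg {n r : ℕ} (hrn : r < n) (hr1 : 1 ≤ r) :
    r ∉ verts n (Finset.Icc 1 (r-1)) := by
  rw [mem_verts_iff]; omega

lemma n_not_mem_Ig {n r : ℕ} (hrn : r < n) :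
    n ∉ Finset.Icc 1 (r-1) := by
  rw [Finset.mem_Icc]; omega

/-- extend a subtype-indexed coloring to all of ℕ (junk `∅` off the vertex set) -/
noncomputable def extC {N : ℕ} (V : Finset ℕ) (γ : {x // x ∈ V} → Finset (Fin N)) :
    ℕ → Finset (Fin N) :=
  fun x => if hx : x ∈ V then γ ⟨x, hx⟩ else ∅

lemma extC_coe {N : ℕ} {V : Finset ℕ} (γ : {x // x ∈ V} → Finset (Fin N))
    (v : {x // x ∈ V}) : extC V γ v.val = γ v := by
  simp [extC]

lemma extC_mem {N : ℕ} {V : Finset ℕ} (γ : {x // x ∈ V} → Finset (Fin N))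
    {x : ℕ} (hx : x ∈ V) : extC V γ x = γ ⟨x, hx⟩ := dif_pos hx

lemma sum_sum_coe {M : Type*} [AddCommMonoid M] (s : Finset ℕ) (F : ℕ → ℕ → M) :
    (∑ v : {x // x ∈ s}, ∑ u : {x // x ∈ s}, F v.val u.val) = ∑ v ∈ s, ∑ u ∈ s, F v u := by
  rw [← Finset.sum_coe_sort s (fun v => ∑ u ∈ s, F v u)]
  exact Fintype.sum_congr _ _ fun v => Finset.sum_coe_sort s (F v.val)

lemma asc_eq {N : ℕ} (n : ℕ) (I : Finset ℕ) (h : ℕ → ℕ)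
    (γ : {x // x ∈ verts n I} → Finset (Fin N)) :
    asc n I h γ = ∑ v ∈ verts n I, ∑ u ∈ verts n I,
      if v < u ∧ u ≤ h v then cnt (extC _ γ v) (extC _ γ u) else 0 := by
  rw [asc, ← sum_sum_coe]
  refine Fintype.sum_congr _ _ fun v => Fintype.sum_congr _ _ fun u => ?_
  rw [extC_coe, extC_coe]
  rfl

lemma mono_eq {N : ℕ} (n : ℕ) (I : Finset ℕ)
    (γ : {x // x ∈ verts n I} → Finset (Fin N)) :
    (∏ v : {x // x ∈ verts n I}, ∏ a ∈ γ v, MvPolynomial.X (R := ℤ) a)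
      = ∏ x ∈ verts n I, ∏ a ∈ extC _ γ x, MvPolynomial.X a := by
  rw [← Finset.prod_coe_sort (verts n I) (fun x => ∏ a ∈ extC _ γ x, MvPolynomial.X a)]
  exact Fintype.prod_congr _ _ fun v => by rw [extC_coe]

end Transport

section Maps
open GenHess

/-- merge-and-split map: colorings of the `g''`-graph plus a chosen color at `n`
give colorings of the `h`-graph -/
noncomputable def lift (n r : ℕ) {N : ℕ}
    (η : {x // x ∈ verts n (Finset.Icc 1 (r-1))} → Finset (Fin N)) (c : Fin N) :
    {x // x ∈ verts n (Finset.Icc 1 r)} → Finset (Fin N) :=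
  fun v => if v.val = r then {c}
    else if hv : v.val ∈ verts n (Finset.Icc 1 (r-1)) then
      (if v.val = n then (η ⟨v.val, hv⟩).erase c else η ⟨v.val, hv⟩)
    else ∅

lemma extC_lift {n r : ℕ} (hr1 : 1 ≤ r) (hrn : r < n) {N : ℕ}
    (η : {x // x ∈ verts n (Finset.Icc 1 (r-1))} → Finset (Fin N)) (c : Fin N) (x : ℕ) :
    extC (verts n (Finset.Icc 1 r)) (lift n r η c) x =
      if x = r then {c}
      else if x = n then (extC (verts n (Finset.Icc 1 (r-1))) η n).erase c
      else extC (verts n (Finset.Icc 1 (r-1))) η x := by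
  by_cases hxr : x = r
  · subst hxr
    rw [if_pos rfl, extC_mem _ (mem_verts_iff.mpr (Or.inr ⟨hr1, le_rfl⟩)), lift, if_pos rfl]
  · rw [if_neg hxr]
    by_cases hxg : x ∈ verts n (Finset.Icc 1 (r-1))
    · have hxh : x ∈ verts n (Finset.Icc 1 r) := by
        rw [mem_verts_iff] at hxg ⊢; omega
      rw [extC_mem _ hxh, lift, if_neg hxr, dif_pos hxg]
      by_cases hxn : x = n
      · subst hxn
        rw [if_pos rfl, if_pos rfl, extC_mem _ hxg]
      · rw [if_neg hxn, if_neg hxn, extC_mem _ hxg]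
    · have hxh : x ∉ verts n (Finset.Icc 1 r) := by
        rw [mem_verts_iff] at hxg ⊢; omega
      have hxn : x ≠ n := by
        rw [mem_verts_iff] at hxg; omega
      rw [if_neg hxn, extC, dif_neg hxh, extC, dif_neg hxg]

lemma lift_val {n r : ℕ} (hr1 : 1 ≤ r) (hrn : r < n) {N : ℕ}
    (η : {x // x ∈ verts n (Finset.Icc 1 (r-1))} → Finset (Fin N)) (c : Fin N)
    (v : {x // x ∈ verts n (Finset.Icc 1 r)}) :
    lift n r η c v =
      if v.val = r then {c}
      else if v.val = n then (extC (verts n (Finset.Icc 1 (r-1))) η n).erase c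
      else extC (verts n (Finset.Icc 1 (r-1))) η v.val := by
  rw [← extC_coe (lift n r η c) v, extC_lift hr1 hrn]

noncomputable def pick {N : ℕ} (hN : 0 < N) (s : Finset (Fin N)) : Fin N :=
  if hne : s.Nonempty then s.min' hne else ⟨0, hN⟩

lemma pick_singleton {N : ℕ} (hN : 0 < N) (c : Fin N) : pick hN {c} = c := by
  rw [pick, dif_pos ⟨c, Finset.mem_singleton_self c⟩, Finset.min'_singleton]

/-- inverse map: split off the smallest color at `r`, merge the rest into `n` -/
noncomputable def unlift (n r : ℕ) {N : ℕ} (hN : 0 < N) (hr1 : 1 ≤ r) (hrn : r < n)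
    (γ : {x // x ∈ verts n (Finset.Icc 1 r)} → Finset (Fin N)) :
    ({x // x ∈ verts n (Finset.Icc 1 (r-1))} → Finset (Fin N)) × Fin N :=
  (fun u => if u.val = n
      then γ ⟨n, by rw [mem_verts_iff]; exact Or.inl rfl⟩ ∪ γ ⟨r, by rw [mem_verts_iff]; omega⟩
      else γ ⟨u.val, by have hu := u.2; rw [mem_verts_iff] at hu ⊢; omega⟩,
   pick hN (γ ⟨r, by rw [mem_verts_iff]; omega⟩))

end Maps

section Ctx
open GenHess

variable {N : ℕ} {n r j : ℕ} {h : ℕ → ℕ}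

lemma n_mem_verts (n : ℕ) (I : Finset ℕ) : n ∈ verts n I := Finset.mem_insert_self n I

lemma jn_mem (hj1 : 1 ≤ j) (hjr : j < r) (hrn : r < n) :
    j ∈ verts n (Finset.Icc 1 (r-1)) := by rw [mem_verts_iff]; omega

lemma asc_update (hj1 : 1 ≤ j) (hjr : j < r) (hrn : r < n)
    (η : {x // x ∈ verts n (Finset.Icc 1 (r-1))} → Finset (Fin N)) :
    asc n (Finset.Icc 1 (r-1)) (Function.update h j n) η
      = asc n (Finset.Icc 1 (r-1)) (Function.update h j (r-1)) η
        + cnt (extC _ η j) (extC _ η n) := by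
  rw [asc_eq, asc_eq]
  have hpt : ∀ v ∈ verts n (Finset.Icc 1 (r-1)), ∀ u ∈ verts n (Finset.Icc 1 (r-1)),
      (if v < u ∧ u ≤ Function.update h j n v then cnt (extC _ η v) (extC _ η u) else 0)
      = (if v < u ∧ u ≤ Function.update h j (r-1) v then cnt (extC _ η v) (extC _ η u) else 0)
        + (if v = j ∧ u = n then cnt (extC _ η j) (extC _ η n) else 0) := by
    intro v hv u hu
    by_cases hvj : v = j
    · rw [hvj, Function.update_self, Function.update_self]
      by_cases hun : u = n
      · rw [hun, if_pos (show j < n ∧ n ≤ n by omega), if_neg (show ¬(j < n ∧ n ≤ r-1) by omega),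
          if_pos ⟨rfl, rfl⟩, zero_add]
      · rw [mem_verts_iff] at hu
        rw [if_congr (show (j < u ∧ u ≤ n) ↔ (j < u ∧ u ≤ r-1) by omega) rfl rfl,
          if_neg (show ¬(j = j ∧ u = n) from fun hc => hun hc.2), add_zero]
    · rw [Function.update_of_ne hvj, Function.update_of_ne hvj,
        if_neg (show ¬(v = j ∧ u = n) from fun hc => hvj hc.1), add_zero]
  rw [Finset.sum_congr rfl (fun v hv => Finset.sum_congr rfl (fun u hu => hpt v hv u hu))]
  rw [Finset.sum_congr rfl (fun v _ => Finset.sum_add_distrib), Finset.sum_add_distrib]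
  congr 1
  rw [Finset.sum_eq_single_of_mem j (jn_mem hj1 hjr hrn)
    (fun v _ hvj => Finset.sum_eq_zero fun u _ =>
      if_neg (show ¬(v = j ∧ u = n) from fun hc => hvj hc.1))]
  rw [Finset.sum_eq_single_of_mem n (n_mem_verts n _)
    (fun u _ hun => if_neg (show ¬(j = j ∧ u = n) from fun hc => hun hc.2))]
  exact if_pos ⟨rfl, rfl⟩

lemma proper_update_iff (hj1 : 1 ≤ j) (hjr : j < r) (hrn : r < n)
    (η : {x // x ∈ verts n (Finset.Icc 1 (r-1))} → Finset (Fin N)) :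
    IsProper n (Finset.Icc 1 (r-1)) (Function.update h j n) η ↔
      IsProper n (Finset.Icc 1 (r-1)) (Function.update h j (r-1)) η
        ∧ Disjoint (extC _ η j) (extC _ η n) := by
  constructor
  · rintro ⟨hc, hd⟩
    refine ⟨⟨hc, fun v u hvu hle => hd v u hvu (le_trans hle ?_)⟩, ?_⟩
    · by_cases hvj : v.val = j
      · rw [hvj, Function.update_self, Function.update_self]; omega
      · rw [Function.update_of_ne hvj, Function.update_of_ne hvj]
    · rw [extC_mem _ (jn_mem hj1 hjr hrn), extC_mem _ (n_mem_verts n _)]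
      refine hd _ _ (show j < n by omega) ?_
      show n ≤ Function.update h j n j
      rw [Function.update_self]
  · rintro ⟨⟨hc, hd⟩, hdisj⟩
    refine ⟨hc, fun v u hvu hle => ?_⟩
    by_cases hvj : v.val = j
    · by_cases hun : u.val = n
      · have hv' : v = ⟨j, jn_mem hj1 hjr hrn⟩ := Subtype.ext hvj
        have hu' : u = ⟨n, n_mem_verts n _⟩ := Subtype.ext hun
        rw [hv', hu']
        rw [extC_mem _ (jn_mem hj1 hjr hrn), extC_mem _ (n_mem_verts n _)] at hdisj
        exact hdisj
      · refine hd v u hvu ?_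
        have hu2 := u.2
        rw [mem_verts_iff] at hu2
        rw [hvj, Function.update_self] at hle ⊢
        omega
    · refine hd v u hvu ?_
      rw [Function.update_of_ne hvj] at hle ⊢
      exact hle

lemma lift_proper (hj1 : 1 ≤ j) (hjr : j < r) (hrn : r < n)
    (hjv : h j = r)
    (hlt : ∀ v, 1 ≤ v → v < j → h v < r) (hgt : ∀ v, j < v → v ≤ r → h v = n)
    (η : {x // x ∈ verts n (Finset.Icc 1 (r-1))} → Finset (Fin N)) (c : Fin N)
    (hp : IsProper n (Finset.Icc 1 (r-1)) (Function.update h j (r-1)) η)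
    (hcT : c ∈ extC _ η n) (hcB : c ∉ extC _ η j) :
    IsProper n (Finset.Icc 1 r) h (lift n r η c) := by
  have hr1 : 1 ≤ r := by omega
  obtain ⟨hpc, hpd⟩ := hp
  constructor
  · intro v
    rw [lift_val hr1 hrn]
    have hv2 := v.2
    rw [mem_verts_iff] at hv2
    by_cases hvr : v.val = r
    · rw [if_pos hvr, Finset.card_singleton, hvr, wt_small hrn hr1 le_rfl]
    · rw [if_neg hvr]
      by_cases hvn : v.val = n
      · rw [if_pos hvn, hvn, Finset.card_erase_of_mem hcT, extC_mem _ (n_mem_verts n _),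
          hpc ⟨n, n_mem_verts n _⟩, wt_top hrn, wt_top (show r-1 < n by omega)]
        omega
      · have hvm : v.val ∈ verts n (Finset.Icc 1 (r-1)) := by rw [mem_verts_iff]; omega
        rw [if_neg hvn, extC_mem _ hvm, hpc ⟨v.val, hvm⟩]
        show wt n (Finset.Icc 1 (r-1)) v.val = wt n (Finset.Icc 1 r) v.val
        rw [wt_small (show r-1 < n by omega) (by omega) (by omega),
          wt_small hrn (by omega) (by omega)]
  · intro v u hvu hle
    rw [lift_val hr1 hrn, lift_val hr1 hrn]
    have hv2 := v.2
    rw [mem_verts_iff] at hv2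
    have hu2 := u.2
    rw [mem_verts_iff] at hu2
    by_cases hvr : v.val = r
    · have hun : u.val = n := by
        rw [hvr] at hvu; omega
      rw [if_pos hvr, if_neg (show u.val ≠ r by omega), if_pos hun,
        Finset.disjoint_singleton_left]
      exact Finset.notMem_erase c _
    · have hvn : v.val ≠ n := by omega
      rw [if_neg hvr, if_neg hvn]
      have hvm : v.val ∈ verts n (Finset.Icc 1 (r-1)) := by rw [mem_verts_iff]; omega
      by_cases hur : u.val = r
      · rw [if_pos hur]
        rw [Finset.disjoint_singleton_right]
        rcases lt_trichotomy v.val j with hlt' | heq | hgt'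
        · exfalso
          have := hlt v.val (by omega) hlt'
          rw [hur] at hle
          omega
        · rw [heq]
          exact hcB
        · have hn := hgt v.val hgt' (by omega)
          have D := hpd ⟨v.val, hvm⟩ ⟨n, n_mem_verts n _⟩ (show v.val < n by omega)
            (by rw [Function.update_of_ne (show v.val ≠ j by omega), hn])
          intro hmem
          rw [extC_mem _ hvm] at hmem
          rw [extC_mem _ (n_mem_verts n _)] at hcT
          exact absurd hcT (Finset.disjoint_left.mp D hmem)
      · by_cases hun : u.val = n
        · rw [if_neg hur, if_pos hun]
          rw [hun] at hle
          rcases lt_trichotomy v.val j with hlt' | heq | hgt'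
          · exfalso
            have := hlt v.val (by omega) hlt'
            omega
          · exfalso
            rw [heq, hjv] at hle
            omega
          · have hn := hgt v.val hgt' (by omega)
            have D := hpd ⟨v.val, hvm⟩ ⟨n, n_mem_verts n _⟩ (show v.val < n by omega)
              (by rw [Function.update_of_ne (show v.val ≠ j by omega), hn])
            rw [extC_mem _ hvm, extC_mem _ (n_mem_verts n _)]
            exact Finset.disjoint_of_subset_right (Finset.erase_subset _ _) D
        · rw [if_neg hur, if_neg hun]
          have hum : u.val ∈ verts n (Finset.Icc 1 (r-1)) := by rw [mem_verts_iff]; omega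
          rw [extC_mem _ hvm, extC_mem _ hum]
          refine hpd ⟨v.val, hvm⟩ ⟨u.val, hum⟩ hvu ?_
          show u.val ≤ Function.update h j (r-1) v.val
          by_cases hvj : v.val = j
          · rw [hvj, Function.update_self]
            omega
          · rw [Function.update_of_ne hvj]
            exact hle

lemma prod_verts_split {M : Type*} [CommMonoid M] (hr1 : 1 ≤ r) (hrn : r < n) (F : ℕ → M) :
    ∏ x ∈ verts n (Finset.Icc 1 r), F x
      = F r * ∏ x ∈ verts n (Finset.Icc 1 (r-1)), F x := by
  rw [verts_insert hr1 hrn, Finset.prod_insert (r_not_mem_Vg hrn hr1)]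

lemma sum_verts_split {M : Type*} [AddCommMonoid M] (hr1 : 1 ≤ r) (hrn : r < n) (F : ℕ → M) :
    ∑ x ∈ verts n (Finset.Icc 1 r), F x
      = F r + ∑ x ∈ verts n (Finset.Icc 1 (r-1)), F x := by
  rw [verts_insert hr1 hrn, Finset.sum_insert (r_not_mem_Vg hrn hr1)]

lemma sum_vg_split {M : Type*} [AddCommMonoid M] (hrn : r < n) (F : ℕ → M) :
    ∑ x ∈ verts n (Finset.Icc 1 (r-1)), F x
      = F n + ∑ x ∈ Finset.Icc 1 (r-1), F x := by
  rw [show verts n (Finset.Icc 1 (r-1)) = insert n (Finset.Icc 1 (r-1)) from rfl,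
    Finset.sum_insert (n_not_mem_Ig hrn)]

lemma prod_vg_split {M : Type*} [CommMonoid M] (hrn : r < n) (F : ℕ → M) :
    ∏ x ∈ verts n (Finset.Icc 1 (r-1)), F x
      = F n * ∏ x ∈ Finset.Icc 1 (r-1), F x := by
  rw [show verts n (Finset.Icc 1 (r-1)) = insert n (Finset.Icc 1 (r-1)) from rfl,
    Finset.prod_insert (n_not_mem_Ig hrn)]

lemma mono_lift (hj1 : 1 ≤ j) (hjr : j < r) (hrn : r < n)
    (η : {x // x ∈ verts n (Finset.Icc 1 (r-1))} → Finset (Fin N)) (c : Fin N)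
    (hcT : c ∈ extC _ η n) :
    (∏ v : {x // x ∈ verts n (Finset.Icc 1 r)}, ∏ a ∈ lift n r η c v,
        MvPolynomial.X (R := ℤ) a)
      = ∏ v : {x // x ∈ verts n (Finset.Icc 1 (r-1))}, ∏ a ∈ η v, MvPolynomial.X a := by
  have hr1 : 1 ≤ r := by omega
  rw [mono_eq, mono_eq, prod_verts_split hr1 hrn]
  have hstep : ∀ x ∈ verts n (Finset.Icc 1 (r-1)),
      (∏ a ∈ extC (verts n (Finset.Icc 1 r)) (lift n r η c) x, MvPolynomial.X (R := ℤ) a)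
      = ∏ a ∈ (if x = n then (extC (verts n (Finset.Icc 1 (r-1))) η n).erase c
          else extC (verts n (Finset.Icc 1 (r-1))) η x), MvPolynomial.X a := by
    intro x hx
    rw [mem_verts_iff] at hx
    rw [extC_lift hr1 hrn, if_neg (show x ≠ r by omega)]
  rw [Finset.prod_congr rfl hstep, extC_lift hr1 hrn, if_pos rfl, Finset.prod_singleton]
  rw [prod_vg_split hrn, prod_vg_split hrn, if_pos rfl]
  have hstep2 : ∀ x ∈ Finset.Icc 1 (r-1),
      (∏ a ∈ (if x = n then (extC (verts n (Finset.Icc 1 (r-1))) η n).erase c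
          else extC (verts n (Finset.Icc 1 (r-1))) η x), MvPolynomial.X (R := ℤ) a)
      = ∏ a ∈ extC (verts n (Finset.Icc 1 (r-1))) η x, MvPolynomial.X a := by
    intro x hx
    rw [Finset.mem_Icc] at hx
    rw [if_neg (show x ≠ n by omega)]
  rw [Finset.prod_congr rfl hstep2, ← mul_assoc, Finset.mul_prod_erase _ _ hcT]

lemma asc_lift (hj1 : 1 ≤ j) (hjr : j < r) (hrn : r < n)
    (hjv : h j = r) (htop : h r = n)
    (hlt : ∀ v, 1 ≤ v → v < j → h v < r) (hgt : ∀ v, j < v → v ≤ r → h v = n)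
    (η : {x // x ∈ verts n (Finset.Icc 1 (r-1))} → Finset (Fin N)) (c : Fin N)
    (hcT : c ∈ extC _ η n) :
    asc n (Finset.Icc 1 r) h (lift n r η c)
      = asc n (Finset.Icc 1 (r-1)) (Function.update h j (r-1)) η
        + (((extC _ η j).filter (· < c)).card
          + ((extC _ η n).filter (fun d => c < d)).card) := by
  have hr1 : 1 ≤ r := by omega
  rw [asc_eq, asc_eq]
  set δ := extC (verts n (Finset.Icc 1 r)) (lift n r η c) with hδdef
  set ε := extC (verts n (Finset.Icc 1 (r-1))) η with hεdef
  have hδ : ∀ x, δ x = if x = r then {c} else if x = n then (ε n).erase c else ε x :=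
    fun x => extC_lift hr1 hrn η c x
  have hδr : δ r = {c} := by rw [hδ, if_pos rfl]
  have hδn : δ n = (ε n).erase c := by
    rw [hδ, if_neg (show n ≠ r by omega), if_pos rfl]
  rw [sum_verts_split hr1 hrn]
  have hrow_r : (∑ u ∈ verts n (Finset.Icc 1 r),
        if r < u ∧ u ≤ h r then cnt (δ r) (δ u) else 0)
      = ((ε n).filter (fun d => c < d)).card := by
    rw [sum_verts_split hr1 hrn,
      if_neg (show ¬(r < r ∧ r ≤ h r) from fun hc => by omega), zero_add,
      sum_vg_split hrn,
      if_pos (show r < n ∧ n ≤ h r from ⟨hrn, by rw [htop]⟩), hδr, hδn,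
      cnt_singleton_left, cnt_filter_gt,
      Finset.sum_eq_zero (fun u hu => if_neg (show ¬(r < u ∧ u ≤ h r) from fun hc => by
        rw [Finset.mem_Icc] at hu; omega)), add_zero]
  rw [hrow_r]
  have hrow : ∀ v ∈ verts n (Finset.Icc 1 (r-1)),
      (∑ u ∈ verts n (Finset.Icc 1 r), if v < u ∧ u ≤ h v then cnt (δ v) (δ u) else 0)
      = (∑ u ∈ verts n (Finset.Icc 1 (r-1)),
          if v < u ∧ u ≤ Function.update h j (r-1) v then cnt (ε v) (ε u) else 0)
        + (if v = j then ((ε j).filter (· < c)).card else 0) := by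
    intro v hv
    rw [mem_verts_iff] at hv
    rcases hv with rfl | hv
    · rw [sum_verts_split hr1 hrn,
        if_neg (show ¬(v < r ∧ r ≤ h v) from fun hc => by omega), zero_add,
        Finset.sum_eq_zero (fun u hu => if_neg (show ¬(v < u ∧ u ≤ h v) from fun hc => by
          rw [mem_verts_iff] at hu; omega)),
        Finset.sum_eq_zero (fun u hu =>
          if_neg (show ¬(v < u ∧ u ≤ Function.update h j (r-1) v) from fun hc => by
            rw [mem_verts_iff] at hu; omega)),
        if_neg (show v ≠ j by omega)]
      omega
    · have hδv : δ v = ε v := by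
        rw [hδ, if_neg (show v ≠ r by omega), if_neg (show v ≠ n by omega)]
      rw [sum_verts_split hr1 hrn, sum_vg_split hrn, sum_vg_split hrn]
      have hIg : ∀ u ∈ Finset.Icc 1 (r-1),
          (if v < u ∧ u ≤ h v then cnt (δ v) (δ u) else 0)
          = (if v < u ∧ u ≤ Function.update h j (r-1) v then cnt (ε v) (ε u) else 0) := by
        intro u hu
        rw [Finset.mem_Icc] at hu
        have hδu : δ u = ε u := by
          rw [hδ, if_neg (show u ≠ r by omega), if_neg (show u ≠ n by omega)]
        rw [hδv, hδu]
        by_cases hvj : v = j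
        · rw [hvj, Function.update_self,
            if_congr (show (j < u ∧ u ≤ h j) ↔ (j < u ∧ u ≤ r-1) by rw [hjv]; omega) rfl rfl]
        · rw [Function.update_of_ne hvj]
      rw [Finset.sum_congr rfl hIg, hδr, hδn, hδv]
      rcases lt_trichotomy v j with hc1 | hc1 | hc1
      · have hvr := hlt v (by omega) hc1
        rw [if_neg (show ¬(v < r ∧ r ≤ h v) from fun hc => by omega),
          if_neg (show ¬(v < n ∧ n ≤ h v) from fun hc => by omega),
          if_neg (show ¬(v < n ∧ n ≤ Function.update h j (r-1) v) from fun hc => by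
            rw [Function.update_of_ne (show v ≠ j by omega)] at hc; omega),
          if_neg (show v ≠ j by omega)]
        omega
      · rw [hc1,
          if_pos (show j < r ∧ r ≤ h j from ⟨hjr, by rw [hjv]⟩),
          if_neg (show ¬(j < n ∧ n ≤ h j) from fun hc => by rw [hjv] at hc; omega),
          if_neg (show ¬(j < n ∧ n ≤ Function.update h j (r-1) j) from fun hc => by
            rw [Function.update_self] at hc; omega),
          if_pos rfl, cnt_singleton_right]
        omega
      · have hvn := hgt v (by omega) (by omega)
        rw [if_pos (show v < r ∧ r ≤ h v from ⟨by omega, by rw [hvn]; omega⟩),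
          if_pos (show v < n ∧ n ≤ h v from ⟨by omega, by rw [hvn]⟩),
          if_pos (show v < n ∧ n ≤ Function.update h j (r-1) v from
            ⟨by omega, by rw [Function.update_of_ne (show v ≠ j by omega), hvn]⟩),
          if_neg (show v ≠ j by omega),
          cnt_singleton_right, cnt_erase (ε v) (ε n) hcT]
        omega
  rw [Finset.sum_congr rfl hrow, Finset.sum_add_distrib,
    Finset.sum_eq_single_of_mem j (jn_mem hj1 hjr hrn) (fun v _ hvj => if_neg hvj),
    if_pos rfl]
  omega

lemma unlift_spec (hN : 0 < N) (hj1 : 1 ≤ j) (hjr : j < r) (hrn : r < n)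
    (hjv : h j = r) (htop : h r = n)
    (hlt : ∀ v, 1 ≤ v → v < j → h v < r) (hgt : ∀ v, j < v → v ≤ r → h v = n)
    (hr1 : 1 ≤ r)
    (γ : {x // x ∈ verts n (Finset.Icc 1 r)} → Finset (Fin N))
    (hp : IsProper n (Finset.Icc 1 r) h γ) :
    IsProper n (Finset.Icc 1 (r-1)) (Function.update h j (r-1)) (unlift n r hN hr1 hrn γ).1
    ∧ (unlift n r hN hr1 hrn γ).2 ∈ extC _ (unlift n r hN hr1 hrn γ).1 n
    ∧ (unlift n r hN hr1 hrn γ).2 ∉ extC _ (unlift n r hN hr1 hrn γ).1 j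
    ∧ lift n r (unlift n r hN hr1 hrn γ).1 (unlift n r hN hr1 hrn γ).2 = γ := by
  obtain ⟨hpc, hpd⟩ := hp
  have hrm : r ∈ verts n (Finset.Icc 1 r) := by rw [mem_verts_iff]; omega
  have hnm : n ∈ verts n (Finset.Icc 1 r) := n_mem_verts n _
  have hval : ∀ (u : {x // x ∈ verts n (Finset.Icc 1 (r-1))})
      (p1 : n ∈ verts n (Finset.Icc 1 r)) (p2 : r ∈ verts n (Finset.Icc 1 r))
      (p3 : u.val ∈ verts n (Finset.Icc 1 r)),
      (unlift n r hN hr1 hrn γ).1 u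
        = if u.val = n then γ ⟨n, p1⟩ ∪ γ ⟨r, p2⟩ else γ ⟨u.val, p3⟩ := fun u p1 p2 p3 => rfl
  have hcard1 : (γ ⟨r, hrm⟩).card = 1 := by
    rw [hpc ⟨r, hrm⟩]
    exact wt_small hrn hr1 le_rfl
  obtain ⟨c0, hc0⟩ := Finset.card_eq_one.mp hcard1
  have hc0r : c0 ∈ γ ⟨r, hrm⟩ := by rw [hc0]; exact Finset.mem_singleton_self c0
  have hDrn : Disjoint (γ ⟨r, hrm⟩) (γ ⟨n, hnm⟩) :=
    hpd ⟨r, hrm⟩ ⟨n, hnm⟩ hrn (le_of_eq htop.symm)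
  have hc0n : c0 ∉ γ ⟨n, hnm⟩ := Finset.disjoint_left.mp hDrn hc0r
  have hpick : (unlift n r hN hr1 hrn γ).2 = c0 := by
    have h2 : (unlift n r hN hr1 hrn γ).2 = pick hN (γ ⟨r, hrm⟩) := rfl
    rw [h2, hc0, pick_singleton]
  have hjVh : j ∈ verts n (Finset.Icc 1 r) := by rw [mem_verts_iff]; omega
  have hmemVh : ∀ (u : {x // x ∈ verts n (Finset.Icc 1 (r-1))}),
      u.val ∈ verts n (Finset.Icc 1 r) := by
    intro u
    have := u.2
    rw [mem_verts_iff] at this ⊢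
    omega
  refine ⟨⟨?_, ?_⟩, ?_, ?_, ?_⟩
  · -- cards
    intro u
    have hu2 := u.2
    rw [mem_verts_iff] at hu2
    rw [hval u hnm hrm (hmemVh u)]
    by_cases hun : u.val = n
    · rw [if_pos hun, hc0, Finset.union_comm, ← Finset.insert_eq,
        Finset.card_insert_of_notMem hc0n]
      have e1 : (γ ⟨n, hnm⟩).card = n - r := by
        rw [hpc ⟨n, hnm⟩]
        exact wt_top hrn
      have e2 : wt n (Finset.Icc 1 (r-1)) u.val = n - (r-1) := by
        rw [hun]
        exact wt_top (by omega)
      rw [e1, e2]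
      omega
    · rw [if_neg hun]
      have e3 : (γ ⟨u.val, hmemVh u⟩).card = 1 := by
        rw [hpc ⟨u.val, hmemVh u⟩]
        show wt n (Finset.Icc 1 r) u.val = 1
        exact wt_small hrn (by omega) (by omega)
      have e2 : wt n (Finset.Icc 1 (r-1)) u.val = 1 :=
        wt_small (by omega) (by omega) (by omega)
      rw [e3]
      exact e2.symm
  · -- disjointness
    intro v u hvu hle
    have hv2 := v.2
    rw [mem_verts_iff] at hv2
    have hu2 := u.2
    rw [mem_verts_iff] at hu2
    by_cases hun : u.val = n
    · rw [hun] at hle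
      have hvj : v.val ≠ j := fun e => by
        rw [e, Function.update_self] at hle; omega
      rw [Function.update_of_ne hvj] at hle
      have hvn : v.val ≠ n := by omega
      rw [hval v hnm hrm (hmemVh v), if_neg hvn, hval u hnm hrm (hmemVh u), if_pos hun]
      refine Finset.disjoint_union_right.mpr ⟨?_, ?_⟩
      · exact hpd ⟨v.val, hmemVh v⟩ ⟨n, hnm⟩ (show v.val < n by omega) hle
      · exact hpd ⟨v.val, hmemVh v⟩ ⟨r, hrm⟩ (show v.val < r by omega) (show r ≤ h v.val by omega)
    · have hvn : v.val ≠ n := by omega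
      rw [hval v hnm hrm (hmemVh v), if_neg hvn, hval u hnm hrm (hmemVh u), if_neg hun]
      refine hpd ⟨v.val, hmemVh v⟩ ⟨u.val, hmemVh u⟩ hvu ?_
      show u.val ≤ h v.val
      by_cases hvj : v.val = j
      · rw [hvj, Function.update_self] at hle
        rw [hvj, hjv]
        omega
      · rw [Function.update_of_ne hvj] at hle
        exact hle
  · -- the chosen color belongs to the merged set at n
    rw [hpick, extC_mem _ (n_mem_verts n _), hval ⟨n, n_mem_verts n _⟩ hnm hrm hnm, if_pos rfl]
    exact Finset.mem_union_right _ hc0r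
  · -- and avoids the color of j
    rw [hpick, extC_mem _ (jn_mem hj1 hjr hrn),
      hval ⟨j, jn_mem hj1 hjr hrn⟩ hnm hrm hjVh,
      if_neg (show j ≠ n by omega)]
    have hDjr : Disjoint (γ ⟨j, hjVh⟩) (γ ⟨r, hrm⟩) :=
      hpd ⟨j, hjVh⟩ ⟨r, hrm⟩ hjr (le_of_eq hjv.symm)
    exact Finset.disjoint_right.mp hDjr hc0r
  · -- lift ∘ unlift = id
    funext v
    rw [hpick, lift_val hr1 hrn]
    by_cases hvr : v.val = r
    · rw [if_pos hvr, show v = ⟨r, hrm⟩ from Subtype.ext hvr, hc0]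
    · by_cases hvn : v.val = n
      · rw [if_neg hvr, if_pos hvn, extC_mem _ (n_mem_verts n _),
          hval ⟨n, n_mem_verts n _⟩ hnm hrm hnm, if_pos rfl, hc0,
          Finset.union_comm, ← Finset.insert_eq, Finset.erase_insert hc0n,
          show v = ⟨n, hnm⟩ from Subtype.ext hvn]
      · rw [if_neg hvr, if_neg hvn]
        have hvg : v.val ∈ verts n (Finset.Icc 1 (r-1)) := by
          have := v.2
          rw [mem_verts_iff] at this ⊢
          omega
        rw [extC_mem _ hvg, hval ⟨v.val, hvg⟩ hnm hrm v.2, if_neg hvn]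

lemma left_inv_lift (hN : 0 < N) (hjr : j < r) (hrn : r < n) (hr1 : 1 ≤ r)
    (η : {x // x ∈ verts n (Finset.Icc 1 (r-1))} → Finset (Fin N)) (c : Fin N)
    (hcT : c ∈ extC _ η n) :
    unlift n r hN hr1 hrn (lift n r η c) = (η, c) := by
  have hrm : r ∈ verts n (Finset.Icc 1 r) := by rw [mem_verts_iff]; omega
  have hnm : n ∈ verts n (Finset.Icc 1 r) := n_mem_verts n _
  have hliftr : lift n r η c ⟨r, hrm⟩ = {c} := by
    rw [lift_val hr1 hrn]
    exact if_pos rfl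
  have hcT' : c ∈ η ⟨n, n_mem_verts n _⟩ := by
    rw [← extC_mem η (n_mem_verts n _)]
    exact hcT
  have hval : ∀ (u : {x // x ∈ verts n (Finset.Icc 1 (r-1))})
      (p1 : n ∈ verts n (Finset.Icc 1 r)) (p2 : r ∈ verts n (Finset.Icc 1 r))
      (p3 : u.val ∈ verts n (Finset.Icc 1 r)),
      (unlift n r hN hr1 hrn (lift n r η c)).1 u
        = if u.val = n then lift n r η c ⟨n, p1⟩ ∪ lift n r η c ⟨r, p2⟩
          else lift n r η c ⟨u.val, p3⟩ := fun u p1 p2 p3 => rfl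
  have h2 : (unlift n r hN hr1 hrn (lift n r η c)).2 = c := by
    have : (unlift n r hN hr1 hrn (lift n r η c)).2 = pick hN (lift n r η c ⟨r, hrm⟩) := rfl
    rw [this, hliftr, pick_singleton]
  have hliftn : lift n r η c ⟨n, hnm⟩ = (extC (verts n (Finset.Icc 1 (r-1))) η n).erase c := by
    rw [lift_val hr1 hrn, if_neg (show n ≠ r by omega), if_pos rfl]
  have h1 : (unlift n r hN hr1 hrn (lift n r η c)).1 = η := by
    funext u
    have hu2 := u.2
    rw [mem_verts_iff] at hu2
    by_cases hun : u.val = n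
    · rw [hval u hnm hrm (by rw [mem_verts_iff]; omega), if_pos hun, hliftn, hliftr, extC_mem η (n_mem_verts n _),
        Finset.union_comm, ← Finset.insert_eq, Finset.insert_erase hcT',
        show u = ⟨n, n_mem_verts n _⟩ from Subtype.ext hun]
    · have humVh : u.val ∈ verts n (Finset.Icc 1 r) := by rw [mem_verts_iff]; omega
      have humVg : u.val ∈ verts n (Finset.Icc 1 (r-1)) := u.2
      rw [hval u hnm hrm humVh, if_neg hun, lift_val hr1 hrn,
        if_neg (show ((⟨u.val, humVh⟩ : {x // x ∈ verts n (Finset.Icc 1 r)}) : ℕ) ≠ r by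
          show u.val ≠ r; omega),
        if_neg (show ((⟨u.val, humVh⟩ : {x // x ∈ verts n (Finset.Icc 1 r)}) : ℕ) ≠ n by
          show u.val ≠ n; omega)]
      show extC _ η u.val = η u
      rw [extC_mem η humVg]
  rw [Prod.ext_iff]
  exact ⟨h1, h2⟩

end Ctx

end CsfAux

open CsfAux

/-- Corollary 48(2), eq. (74). -/
theorem csf_blowup_last (n r : ℕ) (h : ℕ → ℕ) (hgen : IsGenHess n (Finset.Icc 1 r) h)
    (hr : 1 ≤ r) (hrn : r < n) (htop : h r = n)
    (j : ℕ) (hj : j ∈ Finset.Icc 1 r) (hjv : h j = r)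
    (huniq : ∀ i ∈ Finset.Icc 1 r, h i = r → i = j)
    (N : ℕ) (hN : 1 ≤ N) :
    csf n (Finset.Icc 1 r) h N =
      csf n (Finset.Icc 1 (r - 1)) (Function.update h j n) N +
      Polynomial.X * qNum (MvPolynomial (Fin N) ℤ) (n - r) *
        csf n (Finset.Icc 1 (r - 1)) (Function.update h j (r - 1)) N := by
  classical
  obtain ⟨hIb, hmap, hge, hmono⟩ := hgen
  have hj1 : 1 ≤ j := (Finset.mem_Icc.mp hj).1
  have hjr2 : j ≤ r := (Finset.mem_Icc.mp hj).2
  have hjltr : j < r := by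
    rcases eq_or_lt_of_le hjr2 with e | l
    · exfalso
      rw [e, htop] at hjv
      omega
    · exact l
  have hN0 : 0 < N := hN
  have hmemIh : ∀ v, 1 ≤ v → v ≤ r → v ∈ verts n (Finset.Icc 1 r) := fun v a b => by
    rw [mem_verts_iff]; omega
  have hlt : ∀ v, 1 ≤ v → v < j → h v < r := by
    intro v h1 h2
    have hle : h v ≤ h j :=
      hmono v (hmemIh v h1 (by omega)) j (hmemIh j hj1 hjr2) (le_of_lt h2)
    rw [hjv] at hle
    rcases eq_or_lt_of_le hle with e | l
    · exact absurd (huniq v (Finset.mem_Icc.mpr ⟨h1, by omega⟩) e) (by omega)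
    · exact l
  have hgt : ∀ v, j < v → v ≤ r → h v = n := by
    intro v h2 h3
    have hge' : h j ≤ h v :=
      hmono j (hmemIh j hj1 hjr2) v (hmemIh v (by omega) h3) (le_of_lt h2)
    rw [hjv] at hge'
    have hvm := hmap v (hmemIh v (by omega) h3)
    rw [mem_verts_iff] at hvm
    rcases hvm with e | ⟨_, hb⟩
    · exact e
    · exfalso
      have he : h v = r := le_antisymm hb hge'
      have := huniq v (Finset.mem_Icc.mpr ⟨by omega, h3⟩) he
      omega
  -- Step 1: reindex proper colorings of `h` by pairs (g''-coloring, chosen color)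
  have step1 :
      (∑ γ ∈ Finset.univ.filter
          (fun γ : {x // x ∈ verts n (Finset.Icc 1 r)} → Finset (Fin N) =>
            IsProper n (Finset.Icc 1 r) h γ),
        Polynomial.C (∏ v, ∏ a ∈ γ v, MvPolynomial.X (R := ℤ) a)
          * Polynomial.X ^ asc n (Finset.Icc 1 r) h γ)
      = ∑ p ∈ Finset.univ.filter
          (fun p : ({x // x ∈ verts n (Finset.Icc 1 (r-1))} → Finset (Fin N)) × Fin N =>
            IsProper n (Finset.Icc 1 (r-1)) (Function.update h j (r-1)) p.1
            ∧ p.2 ∈ extC _ p.1 n ∧ p.2 ∉ extC _ p.1 j),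
          Polynomial.C (∏ v, ∏ a ∈ p.1 v, MvPolynomial.X (R := ℤ) a)
            * Polynomial.X ^ (asc n (Finset.Icc 1 (r-1)) (Function.update h j (r-1)) p.1
                + (((extC _ p.1 j).filter (· < p.2)).card
                  + ((extC _ p.1 n).filter (fun d => p.2 < d)).card)) := by
    refine (Finset.sum_nbij' (fun p => lift n r p.1 p.2)
      (fun γ => unlift n r hN0 hr hrn γ) ?_ ?_ ?_ ?_ ?_).symm
    · intro p hp
      rw [Finset.mem_filter] at hp ⊢
      obtain ⟨-, hP, hcT, hcB⟩ := hp
      exact ⟨Finset.mem_univ _, lift_proper hj1 hjltr hrn hjv hlt hgt p.1 p.2 hP hcT hcB⟩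
    · intro γ hγ
      rw [Finset.mem_filter] at hγ ⊢
      obtain ⟨s1, s2, s3, -⟩ := unlift_spec hN0 hj1 hjltr hrn hjv htop hlt hgt hr γ hγ.2
      exact ⟨Finset.mem_univ _, s1, s2, s3⟩
    · intro p hp
      rw [Finset.mem_filter] at hp
      exact (left_inv_lift hN0 hjltr hrn hr p.1 p.2 hp.2.2.1).trans (Prod.mk.eta)
    · intro γ hγ
      rw [Finset.mem_filter] at hγ
      exact (unlift_spec hN0 hj1 hjltr hrn hjv htop hlt hgt hr γ hγ.2).2.2.2
    · intro p hp
      rw [Finset.mem_filter] at hp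
      obtain ⟨-, hP, hcT, hcB⟩ := hp
      rw [mono_lift hj1 hjltr hrn p.1 p.2 hcT,
        asc_lift hj1 hjltr hrn hjv htop hlt hgt p.1 p.2 hcT]
  rw [csf, csf, csf, step1, Finset.sum_filter, Fintype.sum_prod_type]
  -- cardinalities of the color sets at j and n
  have hBcard : ∀ η : {x // x ∈ verts n (Finset.Icc 1 (r-1))} → Finset (Fin N),
      IsProper n (Finset.Icc 1 (r-1)) (Function.update h j (r-1)) η →
      (extC _ η j).card = 1 := by
    intro η hP
    rw [extC_mem η (jn_mem hj1 hjltr hrn), hP.1 ⟨j, jn_mem hj1 hjltr hrn⟩]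
    show wt n (Finset.Icc 1 (r-1)) j = 1
    exact wt_small (by omega) hj1 (by omega)
  have hTcard : ∀ η : {x // x ∈ verts n (Finset.Icc 1 (r-1))} → Finset (Fin N),
      IsProper n (Finset.Icc 1 (r-1)) (Function.update h j (r-1)) η →
      (extC _ η n).card = n - (r-1) := by
    intro η hP
    rw [extC_mem η (n_mem_verts n _), hP.1 ⟨n, n_mem_verts n _⟩]
    show wt n (Finset.Icc 1 (r-1)) n = n - (r-1)
    exact wt_top (by omega)
  -- Step 2: evaluate the inner sum over the chosen color
  have hinner : ∀ η : {x // x ∈ verts n (Finset.Icc 1 (r-1))} → Finset (Fin N),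
      (∑ c : Fin N,
        if (IsProper n (Finset.Icc 1 (r-1)) (Function.update h j (r-1)) η
            ∧ c ∈ extC _ η n ∧ c ∉ extC _ η j) then
          Polynomial.C (∏ v, ∏ a ∈ η v, MvPolynomial.X (R := ℤ) a)
            * Polynomial.X ^ (asc n (Finset.Icc 1 (r-1)) (Function.update h j (r-1)) η
                + (((extC _ η j).filter (· < c)).card
                  + ((extC _ η n).filter (fun d => c < d)).card)) else 0)
      = (if IsProper n (Finset.Icc 1 (r-1)) (Function.update h j (r-1)) η then
          (Polynomial.C (∏ v, ∏ a ∈ η v, MvPolynomial.X (R := ℤ) a)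
            * Polynomial.X ^ asc n (Finset.Icc 1 (r-1)) (Function.update h j (r-1)) η)
          * (Polynomial.X * qNum (MvPolynomial (Fin N) ℤ) (n - r)
            + (if Disjoint (extC _ η j) (extC _ η n) then
                Polynomial.X ^ cnt (extC _ η j) (extC _ η n) else 0))
         else 0) := by
    intro η
    by_cases hP : IsProper n (Finset.Icc 1 (r-1)) (Function.update h j (r-1)) η
    · rw [if_pos hP]
      have hstep : ∀ c : Fin N,
          (if (IsProper n (Finset.Icc 1 (r-1)) (Function.update h j (r-1)) η
              ∧ c ∈ extC _ η n ∧ c ∉ extC _ η j) then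
            Polynomial.C (∏ v, ∏ a ∈ η v, MvPolynomial.X (R := ℤ) a)
              * Polynomial.X ^ (asc n (Finset.Icc 1 (r-1)) (Function.update h j (r-1)) η
                  + (((extC _ η j).filter (· < c)).card
                    + ((extC _ η n).filter (fun d => c < d)).card)) else 0)
          = if c ∈ (extC _ η n) \ (extC _ η j) then
              (Polynomial.C (∏ v, ∏ a ∈ η v, MvPolynomial.X (R := ℤ) a)
                * Polynomial.X ^ asc n (Finset.Icc 1 (r-1)) (Function.update h j (r-1)) η)
              * Polynomial.X ^ (((extC _ η j).filter (· < c)).card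
                  + ((extC _ η n).filter (fun d => c < d)).card) else 0 := by
        intro c
        exact if_congr (by simp [hP, Finset.mem_sdiff]) (by rw [pow_add, mul_assoc]) rfl
      rw [Finset.sum_congr rfl (fun c _ => hstep c), Finset.sum_ite_mem,
        Finset.univ_inter, ← Finset.mul_sum]
      congr 1
      obtain ⟨b, hb⟩ := Finset.card_eq_one.mp (hBcard η hP)
      rw [hb, ← Finset.erase_eq]
      have he1 : ∀ c : Fin N, (({b} : Finset (Fin N)).filter (· < c)).card
          = if b < c then 1 else 0 := fun c => by
        rw [Finset.filter_singleton, apply_ite Finset.card, Finset.card_singleton,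
          Finset.card_empty]
      rw [Finset.sum_congr rfl (fun c _ => by rw [he1 c])]
      have hTne : (extC _ η n).Nonempty :=
        Finset.card_pos.mp (by rw [hTcard η hP]; omega)
      rw [key_sum _ b _ hTne, hTcard η hP, show n - (r-1) - 1 = n - r from by omega]
      congr 1
      by_cases hbT : b ∈ extC _ η n
      · rw [if_pos hbT, if_neg (fun hD => (Finset.disjoint_singleton_left.mp hD) hbT)]
      · rw [if_neg hbT, if_pos (Finset.disjoint_singleton_left.mpr hbT), cnt_singleton_left]
    · rw [if_neg hP]
      exact Finset.sum_eq_zero fun c _ => if_neg (fun hc => hP hc.1)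
  rw [Finset.sum_congr rfl (fun η _ => hinner η)]
  -- Step 3: split into the g' part and the q [n-r]_q g'' part
  have hsplit : ∀ η : {x // x ∈ verts n (Finset.Icc 1 (r-1))} → Finset (Fin N),
      (if IsProper n (Finset.Icc 1 (r-1)) (Function.update h j (r-1)) η then
        (Polynomial.C (∏ v, ∏ a ∈ η v, MvPolynomial.X (R := ℤ) a)
          * Polynomial.X ^ asc n (Finset.Icc 1 (r-1)) (Function.update h j (r-1)) η)
        * (Polynomial.X * qNum (MvPolynomial (Fin N) ℤ) (n - r)
          + (if Disjoint (extC _ η j) (extC _ η n) then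
              Polynomial.X ^ cnt (extC _ η j) (extC _ η n) else 0))
       else 0)
      = (if IsProper n (Finset.Icc 1 (r-1)) (Function.update h j n) η then
          Polynomial.C (∏ v, ∏ a ∈ η v, MvPolynomial.X (R := ℤ) a)
            * Polynomial.X ^ asc n (Finset.Icc 1 (r-1)) (Function.update h j n) η else 0)
        + (Polynomial.X * qNum (MvPolynomial (Fin N) ℤ) (n - r))
          * (if IsProper n (Finset.Icc 1 (r-1)) (Function.update h j (r-1)) η then
              Polynomial.C (∏ v, ∏ a ∈ η v, MvPolynomial.X (R := ℤ) a)
                * Polynomial.X ^ asc n (Finset.Icc 1 (r-1)) (Function.update h j (r-1)) η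
             else 0) := by
    intro η
    by_cases hP : IsProper n (Finset.Icc 1 (r-1)) (Function.update h j (r-1)) η
    · rw [if_pos hP, if_pos hP, mul_add]
      by_cases hD : Disjoint (extC _ η j) (extC _ η n)
      · rw [if_pos hD, if_pos ((proper_update_iff hj1 hjltr hrn η).mpr ⟨hP, hD⟩),
          asc_update hj1 hjltr hrn η, pow_add]
        ring
      · rw [if_neg hD, mul_zero,
          if_neg (fun hP' => hD ((proper_update_iff hj1 hjltr hrn η).mp hP').2)]
        ring
    · rw [if_neg hP, if_neg (fun hP' => hP ((proper_update_iff hj1 hjltr hrn η).mp hP').1),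
        if_neg hP, mul_zero, add_zero]
  rw [Finset.sum_congr rfl (fun η _ => hsplit η), Finset.sum_add_distrib, ← Finset.mul_sum,
    ← Finset.sum_filter, ← Finset.sum_filter]
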